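/- Let Λ = M ⊕ Zk ⊕ Zℓ with M even unimodular, k² = −2, ℓ² = −2 (the case d = t = 1). Then every primitive vector β ∈ Λ of square −4 satisfying β² | 2·div(β) has div(β) = 2 and discriminant class β* = k* + ℓ* in A_Λ ≅ Z/2Z × Z/2Z. In particular, writing β = am + bk + cℓ, the coefficients b and c are both odd and a is even. -/

import Mathlib

/-!
STATEMENT 17. `Λ = M ⊕ ℤk ⊕ ℤℓ`, `M` even unimodular, `k² = -2`, `ℓ² = -2` (`d = t = 1`).
Write a primitive vector `β = a•m + b•k + c•ℓ` with `m ∈ M` primitive, `gcd(a,b,c) = 1`,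
`m² = m2` even.  Then `β² = a² m2 - 2b² - 2c²` and `div(β) = gcd(a, 2b, 2c)`.
If `β² = -4` and `β² ∣ 2 div(β)`, then `div(β) = 2` and
`β₊ = [β/div(β)] = k₊ + ℓ₊` in `A_Λ ≅ ℤ/2 × ℤ/2`, i.e. `b` and `c` are odd and `a` is even.
-/
theorem stmt_17 (a b c m2 D : ℤ)
    (hprim : Int.gcd (Int.gcd a b) c = 1) (heven : 2 ∣ m2)
    (hβ2 : a ^ 2 * m2 - 2 * b ^ 2 - 2 * c ^ 2 = -4)
    (hD : D = Int.gcd (Int.gcd a (2 * b)) (2 * c))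
    (hrefl : (-4 : ℤ) ∣ 2 * D) :
    D = 2 ∧ Odd b ∧ Odd c ∧ Even a := by
  -- 2 ∣ D
  have h2D : (2 : ℤ) ∣ D := by
    obtain ⟨k, hk⟩ := hrefl
    exact ⟨-k, by linarith⟩
  -- D ∣ a
  have hDa : D ∣ a := by
    rw [hD]
    exact dvd_trans (Int.gcd_dvd_left _ _) (Int.gcd_dvd_left _ _)
  have h2a : (2 : ℤ) ∣ a := h2D.trans hDa
  -- b, c odd
  obtain ⟨a', rfl⟩ := h2a
  obtain ⟨m', rfl⟩ := heven
  have key : 8 * (a' ^ 2 * m') - 2 * b ^ 2 - 2 * c ^ 2 = -4 := by linarith [hβ2]; 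
  have hbodd : Odd b := by
    rcases Int.even_or_odd b with ⟨x, hx⟩ | hb
    · exfalso
      rcases Int.even_or_odd c with ⟨y, hy⟩ | ⟨y, hy⟩
      · subst hx hy
        have : 8 * (a' ^ 2 * m') - 8 * x ^ 2 - 8 * y ^ 2 = -4 := by ring_nf; ring_nf at key; linarith
        omega
      · subst hx hy
        have : 8 * (a' ^ 2 * m') - 8 * x ^ 2 - 8 * y ^ 2 - 8 * y - 2 = -4 := by
          ring_nf; ring_nf at key; linarith
        omega
    · exact hb
  have hcodd : Odd c := by
    rcases Int.even_or_odd c with ⟨y, hy⟩ | hc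
    · exfalso
      obtain ⟨x, hx⟩ := hbodd
      subst hx hy
      have : 8 * (a' ^ 2 * m') - 8 * x ^ 2 - 8 * x - 2 - 8 * y ^ 2 = -4 := by
        ring_nf; ring_nf at key; linarith
      omega
    · exact hc
  -- D ∣ 2
  have hD2b : D ∣ 2 * b := by
    rw [hD]; exact dvd_trans (Int.gcd_dvd_left _ _) (Int.gcd_dvd_right _ _)
  have hD2c : D ∣ 2 * c := by
    rw [hD]; exact Int.gcd_dvd_right _ _
  have hD2a : D ∣ 2 * (2 * a') := hDa.mul_left 2
  have hdvd2 : D ∣ 2 := by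
    have h1 : D ∣ ↑(Int.gcd (↑(Int.gcd (2 * (2 * a')) (2 * b))) (2 * c)) :=
      Int.dvd_coe_gcd (Int.dvd_coe_gcd hD2a hD2b) hD2c
    have h2 : (↑(Int.gcd (↑(Int.gcd (2 * (2 * a')) (2 * b))) (2 * c)) : ℤ) = 2 := by
      rw [Int.gcd_mul_left]
      push_cast
      rw [Int.gcd_mul_left, hprim]
      norm_num
    rwa [h2] at h1
  have hD0 : 0 ≤ D := by rw [hD]; positivity
  have : D = 2 := Int.dvd_antisymm hD0 (by norm_num) hdvd2 h2D
  exact ⟨this, hbodd, hcodd, ⟨a', by ring⟩⟩
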